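/- Set τ₁(t) = (cosh(2t⁻²) − 1)/sinh(2t⁻²) for t > 0. Then as t → ∞, the functions x ↦ t⁻¹·x·exp(−½·τ₁(t)·x²) − t⁻¹·x·exp(−½·t⁻²·x²) converge to 0 uniformly on ℝ; that is, sup_{x ∈ ℝ} |t⁻¹·x·(exp(−τ₁(t)·x²/2) − exp(−x²/(2t²)))| → 0 as t → ∞. -/

import Mathlib

open Filter

/-- The Mehler parameter `τ₁(t) = (cosh(2t⁻²) − 1)/sinh(2t⁻²)`. -/
noncomputable def tau₁ (t : ℝ) : ℝ :=
  (Real.cosh (2 * (t ^ 2)⁻¹) - 1) / Real.sinh (2 * (t ^ 2)⁻¹)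

/-- `τ₁` in terms of `sinh`/`cosh` of the half-argument. -/
lemma aux_tau_eq (u : ℝ) (hu : 0 < u) :
    (Real.cosh (2 * u) - 1) / Real.sinh (2 * u) = Real.sinh u / Real.cosh u := by
  rw [Real.cosh_two_mul, Real.sinh_two_mul]
  have h1 : Real.cosh u ^ 2 = Real.sinh u ^ 2 + 1 := Real.cosh_sq u
  have hs : Real.sinh u ≠ 0 := Real.sinh_ne_zero.2 hu.ne'
  have hc : Real.cosh u ≠ 0 := (Real.cosh_pos u).ne'
  field_simp
  linear_combination h1

lemma aux_sinh_le_mul_cosh {u : ℝ} (hu : 0 ≤ u) : Real.sinh u ≤ u * Real.cosh u := by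
  have hd : ∀ x : ℝ, HasDerivAt (fun x : ℝ => x * Real.cosh x - Real.sinh x)
      (x * Real.sinh x) x := by
    intro x
    have h := ((hasDerivAt_id x).mul (Real.hasDerivAt_cosh x)).sub (Real.hasDerivAt_sinh x)
    simp only [id_eq] at h
    rw [show x * Real.sinh x = 1 * Real.cosh x + x * Real.sinh x - Real.cosh x by ring]
    exact h
  have hmono : MonotoneOn (fun x : ℝ => x * Real.cosh x - Real.sinh x) (Set.Ici 0) := by
    apply monotoneOn_of_deriv_nonneg (convex_Ici 0)
    · exact ((continuous_id.mul Real.continuous_cosh).sub Real.continuous_sinh).continuousOn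
    · intro x _
      exact (hd x).differentiableAt.differentiableWithinAt
    · intro x hx
      rw [interior_Ici, Set.mem_Ioi] at hx
      rw [(hd x).deriv]
      exact mul_nonneg hx.le (Real.sinh_nonneg_iff.2 hx.le)
  have h0 := hmono Set.self_mem_Ici (Set.mem_Ici.2 hu) hu
  simp only [Real.sinh_zero, Real.cosh_zero] at h0
  linarith

lemma aux_cosh_le_two {u : ℝ} (hu0 : 0 ≤ u) (hu1 : u ≤ 1) : Real.cosh u ≤ 2 := by
  have h1 : Real.cosh u ≤ Real.cosh 1 := by
    rw [Real.cosh_le_cosh, abs_of_nonneg hu0, abs_one]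
    exact hu1
  have h2 : Real.cosh 1 = (Real.exp 1 + Real.exp (-1)) / 2 := Real.cosh_eq 1
  have h3 : Real.exp 1 < 2.7182818286 := Real.exp_one_lt_d9
  have h4 : Real.exp (-1) ≤ 1 := by
    rw [← Real.exp_zero]
    exact Real.exp_le_exp.2 (by norm_num)
  linarith

/-- Cube lower bound for `exp`. -/
lemma aux_cube_le_exp {y : ℝ} (hy : 0 ≤ y) : y ^ 3 / 27 ≤ Real.exp y := by
  have h1 : y / 3 ≤ Real.exp (y / 3) := by
    have := Real.add_one_le_exp (y / 3)
    linarith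
  have h2 : (y / 3) ^ 3 ≤ Real.exp (y / 3) ^ 3 :=
    pow_le_pow_left₀ (by positivity) h1 3
  have h3 : Real.exp (y / 3) ^ 3 = Real.exp y := by
    rw [← Real.exp_nat_mul]
    norm_num
    ring
  calc y ^ 3 / 27 = (y / 3) ^ 3 := by ring
    _ ≤ Real.exp (y / 3) ^ 3 := h2
    _ = Real.exp y := h3

/-- Gaussian-type cubic bound. -/
lemma aux_cubic_gaussian {a : ℝ} (ha : 0 < a) (x : ℝ) :
    |x| ^ 3 * Real.exp (-(a * x ^ 2) / 2) ≤ Real.sqrt (27 / a ^ 3) := by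
  have hx3 : (0:ℝ) ≤ |x| ^ 3 * Real.exp (-(a * x ^ 2) / 2) := by positivity
  rw [← Real.sqrt_sq hx3]
  apply Real.sqrt_le_sqrt
  have hsq : (|x| ^ 3 * Real.exp (-(a * x ^ 2) / 2)) ^ 2
      = x ^ 6 * Real.exp (-(a * x ^ 2)) := by
    rw [mul_pow, ← Real.exp_nat_mul, ← abs_pow, sq_abs]
    ring_nf
  rw [hsq]
  have h1 : (a * x ^ 2) ^ 3 / 27 ≤ Real.exp (a * x ^ 2) := aux_cube_le_exp (by positivity)
  have hepos := Real.exp_pos (a * x ^ 2)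
  rw [le_div_iff₀ (by positivity : (0:ℝ) < a ^ 3), Real.exp_neg]
  have heq : x ^ 6 * (Real.exp (a * x ^ 2))⁻¹ * a ^ 3
      = (a ^ 3 * x ^ 6) / Real.exp (a * x ^ 2) := by
    field_simp
  rw [heq, div_le_iff₀ hepos]
  nlinarith [h1]

/-- One-sided Lipschitz-type bound for differences of decaying exponentials. -/
lemma aux_exp_diff {A B : ℝ} (h : A ≤ B) :
    Real.exp (-A) - Real.exp (-B) ≤ (B - A) * Real.exp (-A) := by
  have h1 : -(B - A) + 1 ≤ Real.exp (-(B - A)) := Real.add_one_le_exp _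
  have h2 : Real.exp (-B) = Real.exp (-A) * Real.exp (-(B - A)) := by
    rw [← Real.exp_add]
    ring_nf
  have h3 := Real.exp_pos (-A)
  nlinarith

/-- Squeeze lemma for uniform convergence to `0`. -/
lemma aux_squeeze {F : ℝ → ℝ → ℝ} {g : ℝ → ℝ}
    (h : ∀ᶠ t in atTop, ∀ x, |F t x| ≤ g t)
    (hg : Filter.Tendsto g atTop (nhds 0)) :
    TendstoUniformly F (fun _ => 0) atTop := by
  rw [Metric.tendstoUniformly_iff]
  intro ε hε
  filter_upwards [h, hg.eventually_lt_const hε] with t h1 h2 x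
  rw [dist_comm, Real.dist_eq, sub_zero]
  exact lt_of_le_of_lt (h1 x) h2

set_option maxHeartbeats 1000000 in
/-- As `t → ∞`, `x ↦ t⁻¹ x exp(−½ τ₁(t) x²) − t⁻¹ x exp(−½ t⁻² x²)`
tends to `0` uniformly on `ℝ`. -/
theorem tendstoUniformly_id_exp_tau₁_sub_id_exp :
    TendstoUniformly
      (fun (t : ℝ) (x : ℝ) =>
        t⁻¹ * x * Real.exp (-(tau₁ t * x ^ 2) / 2) -
          t⁻¹ * x * Real.exp (-((t ^ 2)⁻¹ * x ^ 2) / 2))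
      (fun _ => 0) atTop := by
  apply aux_squeeze (g := fun t => Real.sqrt 216 * t⁻¹)
  · filter_upwards [eventually_ge_atTop (1:ℝ)] with t ht x
    have ht0 : (0:ℝ) < t := lt_of_lt_of_le one_pos ht
    set u : ℝ := (t ^ 2)⁻¹ with hu_def
    have ht2 : (0:ℝ) < t ^ 2 := by nlinarith
    have hu0 : 0 < u := by rw [hu_def]; exact inv_pos.2 ht2
    have hu1 : u ≤ 1 := by
      rw [hu_def]
      rw [inv_le_one_iff₀]
      right
      nlinarith
    set a : ℝ := Real.sinh u / Real.cosh u with ha_def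
    have hcpos := Real.cosh_pos u
    have hspos : 0 < Real.sinh u := Real.sinh_pos_iff.2 hu0
    have ha0 : 0 < a := div_pos hspos hcpos
    -- tau₁ t = a
    have htau : tau₁ t = a := by
      rw [tau₁, aux_tau_eq u hu0]
    -- a ≤ u
    have hab : a ≤ u := by
      rw [ha_def, div_le_iff₀ hcpos]
      exact aux_sinh_le_mul_cosh hu0.le
    -- a ≥ u / 2
    have ha_half : u / 2 ≤ a := by
      rw [ha_def, div_le_div_iff₀ (by norm_num) hcpos]
      have h1 : u ≤ Real.sinh u := Real.self_le_sinh_iff.2 hu0.le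
      have h2 : Real.cosh u ≤ 2 := aux_cosh_le_two hu0.le hu1
      nlinarith
    -- u - a ≤ 2 u^3
    have hdiff : u - a ≤ 2 * u ^ 3 := by
      have h1 : u ≤ Real.sinh u := Real.self_le_sinh_iff.2 hu0.le
      have hua : u - a ≤ u * (Real.cosh u - 1) := by
        have h2 : u / Real.cosh u ≤ a := by
          rw [ha_def, div_le_div_iff₀ hcpos hcpos]
          nlinarith
        have h3 : u - u / Real.cosh u = u * (Real.cosh u - 1) / Real.cosh u := by
          field_simp
        have h4 : u * (Real.cosh u - 1) / Real.cosh u ≤ u * (Real.cosh u - 1) := by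
          apply div_le_self
          · nlinarith [Real.one_le_cosh u]
          · exact Real.one_le_cosh u
        linarith
      -- cosh u - 1 ≤ 2 u^2
      have hch : Real.cosh u - 1 ≤ 2 * u ^ 2 := by
        have hc2 : Real.cosh u = Real.cosh (u / 2) ^ 2 + Real.sinh (u / 2) ^ 2 := by
          have h := Real.cosh_two_mul (u / 2)
          rw [show 2 * (u / 2) = u by ring] at h
          exact h
        have hcsq : Real.cosh (u / 2) ^ 2 = Real.sinh (u / 2) ^ 2 + 1 := Real.cosh_sq _
        have hs2 : Real.sinh (u / 2) ≤ u := by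
          have h5 : Real.sinh (u / 2) ≤ (u / 2) * Real.cosh (u / 2) :=
            aux_sinh_le_mul_cosh (by positivity)
          have h6 : Real.cosh (u / 2) ≤ 2 := aux_cosh_le_two (by positivity) (by linarith)
          nlinarith [Real.cosh_pos (u / 2)]
        have hs0 : 0 ≤ Real.sinh (u / 2) := Real.sinh_nonneg_iff.2 (by positivity)
        nlinarith
      nlinarith
    -- the two exponentials
    set Ea : ℝ := Real.exp (-(a * x ^ 2) / 2) with hEa_def
    set Eb : ℝ := Real.exp (-(u * x ^ 2) / 2) with hEb_def
    have hEdiff : Ea - Eb ≤ (u - a) * x ^ 2 / 2 * Ea := by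
      have h := aux_exp_diff (A := a * x ^ 2 / 2) (B := u * x ^ 2 / 2)
        (by nlinarith [sq_nonneg x])
      have e1 : -(a * x ^ 2) / 2 = -(a * x ^ 2 / 2) := by ring
      have e2 : -(u * x ^ 2) / 2 = -(u * x ^ 2 / 2) := by ring
      rw [hEa_def, hEb_def, e1, e2]
      calc Real.exp (-(a * x ^ 2 / 2)) - Real.exp (-(u * x ^ 2 / 2))
          ≤ (u * x ^ 2 / 2 - a * x ^ 2 / 2) * Real.exp (-(a * x ^ 2 / 2)) := h
        _ = (u - a) * x ^ 2 / 2 * Real.exp (-(a * x ^ 2 / 2)) := by ring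
    have hEb_le : Eb ≤ Ea := by
      apply Real.exp_le_exp.2
      nlinarith [sq_nonneg x]
    have hEa_pos : 0 < Ea := Real.exp_pos _
    -- rewrite |F t x|
    have habs : |t⁻¹ * x * Real.exp (-(tau₁ t * x ^ 2) / 2) -
        t⁻¹ * x * Real.exp (-((t ^ 2)⁻¹ * x ^ 2) / 2)| = t⁻¹ * |x| * (Ea - Eb) := by
      rw [htau]
      have : t⁻¹ * x * Ea - t⁻¹ * x * Eb = t⁻¹ * x * (Ea - Eb) := by ring
      rw [this, abs_mul, abs_mul, abs_of_nonneg (by positivity : (0:ℝ) ≤ t⁻¹),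
        abs_of_nonneg (by linarith : (0:ℝ) ≤ Ea - Eb)]
    rw [habs]
    -- main estimate
    have hcubic : |x| ^ 3 * Ea ≤ Real.sqrt (216 / u ^ 3) := by
      calc |x| ^ 3 * Ea ≤ Real.sqrt (27 / a ^ 3) := aux_cubic_gaussian ha0 x
        _ ≤ Real.sqrt (216 / u ^ 3) := by
          apply Real.sqrt_le_sqrt
          rw [div_le_div_iff₀ (by positivity) (by positivity)]
          nlinarith [sq_nonneg (a - u/2), sq_nonneg a, sq_nonneg u]
    have step1 : t⁻¹ * |x| * (Ea - Eb) ≤ t⁻¹ * ((u - a) / 2 * (|x| ^ 3 * Ea)) := by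
      have hx2 : |x| * x ^ 2 = |x| ^ 3 := by
        rw [← sq_abs x]
        ring
      have h1 : |x| * (Ea - Eb) ≤ |x| * ((u - a) * x ^ 2 / 2 * Ea) :=
        mul_le_mul_of_nonneg_left hEdiff (abs_nonneg x)
      have h2 : |x| * ((u - a) * x ^ 2 / 2 * Ea) = (u - a) / 2 * (|x| ^ 3 * Ea) := by
        rw [← hx2]
        ring
      calc t⁻¹ * |x| * (Ea - Eb) = t⁻¹ * (|x| * (Ea - Eb)) := by ring
        _ ≤ t⁻¹ * (|x| * ((u - a) * x ^ 2 / 2 * Ea)) := by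
            exact mul_le_mul_of_nonneg_left h1 (by positivity)
        _ = t⁻¹ * ((u - a) / 2 * (|x| ^ 3 * Ea)) := by rw [h2]
    have step2 : t⁻¹ * ((u - a) / 2 * (|x| ^ 3 * Ea)) ≤ t⁻¹ * (u ^ 3 * Real.sqrt (216 / u ^ 3)) := by
      apply mul_le_mul_of_nonneg_left _ (by positivity : (0:ℝ) ≤ t⁻¹)
      apply mul_le_mul (by linarith) hcubic (by positivity) (by positivity)
    have step3 : u ^ 3 * Real.sqrt (216 / u ^ 3) ≤ Real.sqrt 216 := by
      have h1 : u ^ 3 * Real.sqrt (216 / u ^ 3)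
          = Real.sqrt ((u ^ 3) ^ 2 * (216 / u ^ 3)) := by
        rw [Real.sqrt_mul (by positivity), Real.sqrt_sq (by positivity)]
      rw [h1]
      apply Real.sqrt_le_sqrt
      have h2 : (u ^ 3) ^ 2 * (216 / u ^ 3) = 216 * u ^ 3 := by
        field_simp
      rw [h2]
      have h3 : u ^ 3 ≤ 1 := pow_le_one₀ hu0.le hu1
      linarith
    calc t⁻¹ * |x| * (Ea - Eb) ≤ t⁻¹ * (u ^ 3 * Real.sqrt (216 / u ^ 3)) :=
          le_trans step1 step2
      _ ≤ t⁻¹ * Real.sqrt 216 := mul_le_mul_of_nonneg_left step3 (by positivity)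
      _ = Real.sqrt 216 * t⁻¹ := by ring
  · have h := tendsto_inv_atTop_zero (𝕜 := ℝ)
    have := h.const_mul (Real.sqrt 216)
    simpa using this
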